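/- (Maximal welding time.) Suppose a continuous driver $\xi : [0,\tau] \to \mathbb{R}$ welds initial points $x_0 < \xi(0) < y_0$ at time $\tau$ (the flows of $x_0$ and $y_0$ under the upward Loewner equation driven by $\xi$ both first hit $\xi$ at time $\tau$). Then $\tau \leq (y_0 - x_0)^2 / 16$, with equality achieved when $\xi$ is constantly equal to $(x_0 + y_0)/2$. -/

import Mathlib

theorem statement10 (τ : ℝ) (hτ : 0 < τ) (ξ x y : ℝ → ℝ)
    (hξ : ContinuousOn ξ (Set.Icc 0 τ))
    (hb : x 0 < ξ 0 ∧ ξ 0 < y 0)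
    (hodex : ∀ t ∈ Set.Ico (0:ℝ) τ, HasDerivWithinAt x (-2 / (x t - ξ t)) (Set.Ici 0) t)
    (hodey : ∀ t ∈ Set.Ico (0:ℝ) τ, HasDerivWithinAt y (-2 / (y t - ξ t)) (Set.Ici 0) t)
    (horder : ∀ t ∈ Set.Ico (0:ℝ) τ, x t < ξ t ∧ ξ t < y t)
    (hcx : ContinuousOn x (Set.Icc 0 τ)) (hcy : ContinuousOn y (Set.Icc 0 τ))
    (hweldx : x τ = ξ τ) (hweldy : y τ = ξ τ) :
    τ ≤ (y 0 - x 0) ^ 2 / 16 ∧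
      ((∀ t ∈ Set.Icc (0:ℝ) τ, ξ t = (x 0 + y 0) / 2) →
        τ = (y 0 - x 0) ^ 2 / 16) := by
  have hIoo : ∀ t ∈ Set.Ioo (0:ℝ) τ, t ∈ Set.Ico (0:ℝ) τ := fun t ht => ⟨ht.1.le, ht.2⟩
  constructor
  · -- main inequality
    set f : ℝ → ℝ := fun s => (y s - x s) ^ 2 + 16 * s with hf
    have hderiv : ∀ t ∈ Set.Ioo (0:ℝ) τ,
        HasDerivAt f (2 * (y t - x t) * ((-2 / (y t - ξ t)) - (-2 / (x t - ξ t))) + 16) t := by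
      intro t ht
      have hx := (hodex t (hIoo t ht)).hasDerivAt (Ici_mem_nhds ht.1)
      have hy := (hodey t (hIoo t ht)).hasDerivAt (Ici_mem_nhds ht.1)
      have h1 := ((hy.sub hx).pow 2).add ((hasDerivAt_id t).const_mul 16)
      refine h1.congr_deriv ?_
      simp only [Pi.sub_apply]
      ring
    have hnonpos : ∀ t ∈ Set.Ioo (0:ℝ) τ,
        2 * (y t - x t) * ((-2 / (y t - ξ t)) - (-2 / (x t - ξ t))) + 16 ≤ 0 := by
      intro t ht
      obtain ⟨h1, h2⟩ := horder t (hIoo t ht)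
      set u := x t; set v := y t; set w := ξ t
      have hb1 : (0:ℝ) < v - w := by linarith
      have hb2 : (0:ℝ) < w - u := by linarith
      have hprod : (0:ℝ) < (v - w) * (w - u) := mul_pos hb1 hb2
      have hne2 : u - w ≠ 0 := sub_ne_zero.mpr (ne_of_lt h1)
      have heq : (-2 / (v - w)) - (-2 / (u - w)) = -2 * ((v - u) / ((v - w) * (w - u))) := by
        field_simp [hb1.ne', hb2.ne', hne2]
        ring
      rw [heq]
      have hge : 16 ≤ 4 * (v - u) ^ 2 / ((v - w) * (w - u)) := by
        rw [le_div_iff₀ hprod]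
        nlinarith [sq_nonneg ((v - w) - (w - u))]
      have : 2 * (v - u) * (-2 * ((v - u) / ((v - w) * (w - u)))) =
          -(4 * (v - u) ^ 2 / ((v - w) * (w - u))) := by
        field_simp
        ring
      rw [this]
      linarith
    have hcont : ContinuousOn f (Set.Icc 0 τ) :=
      (((hcy.sub hcx).pow 2).add (Continuous.continuousOn (by continuity)))
    have hanti : AntitoneOn f (Set.Icc 0 τ) := by
      apply antitoneOn_of_deriv_nonpos (convex_Icc 0 τ) hcont
      · intro t ht
        rw [interior_Icc] at ht
        exact (hderiv t ht).differentiableAt.differentiableWithinAt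
      · intro t ht
        rw [interior_Icc] at ht
        rw [(hderiv t ht).deriv]
        exact hnonpos t ht
    have hle := hanti ⟨le_refl 0, hτ.le⟩ ⟨hτ.le, le_refl τ⟩ hτ.le
    have : f τ = 16 * τ := by simp [hf, hweldx, hweldy]
    have hf0 : f 0 = (y 0 - x 0) ^ 2 := by simp [hf]
    rw [this, hf0] at hle
    linarith
  · -- equality case
    intro hconst
    set c : ℝ := (x 0 + y 0) / 2 with hc
    set g : ℝ → ℝ := fun s => (y s - c) ^ 2 + 4 * s with hg
    have hderiv : ∀ t ∈ Set.Ioo (0:ℝ) τ, HasDerivAt g 0 t := by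
      intro t ht
      have hy := (hodey t (hIoo t ht)).hasDerivAt (Ici_mem_nhds ht.1)
      have hxc : ξ t = c := hconst t ⟨ht.1.le, ht.2.le⟩
      have hne : y t - c ≠ 0 := by
        have := (horder t (hIoo t ht)).2
        rw [hxc] at this
        linarith
      have h1 := (((hy.sub_const c).pow 2).add ((hasDerivAt_id t).const_mul 4))
      refine h1.congr_deriv ?_
      rw [hxc]
      field_simp [hne]
      ring
    have hcont : ContinuousOn g (Set.Icc 0 τ) :=
      (((hcy.sub continuousOn_const).pow 2).add (Continuous.continuousOn (by continuity)))
    have hdiff : DifferentiableOn ℝ g (interior (Set.Icc 0 τ)) := by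
      intro t ht
      rw [interior_Icc] at ht
      exact (hderiv t ht).differentiableAt.differentiableWithinAt
    have hd0 : ∀ t ∈ interior (Set.Icc (0:ℝ) τ), deriv g t = 0 := by
      intro t ht
      rw [interior_Icc] at ht
      exact (hderiv t ht).deriv
    have hanti : AntitoneOn g (Set.Icc 0 τ) :=
      antitoneOn_of_deriv_nonpos (convex_Icc 0 τ) hcont hdiff
        (fun t ht => (hd0 t ht).le)
    have hmono : MonotoneOn g (Set.Icc 0 τ) :=
      monotoneOn_of_deriv_nonneg (convex_Icc 0 τ) hcont hdiff
        (fun t ht => (hd0 t ht).ge)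
    have h1 := hanti ⟨le_refl 0, hτ.le⟩ ⟨hτ.le, le_refl τ⟩ hτ.le
    have h2 := hmono ⟨le_refl 0, hτ.le⟩ ⟨hτ.le, le_refl τ⟩ hτ.le
    have hgτ : g τ = 4 * τ := by
      have : ξ τ = c := hconst τ ⟨hτ.le, le_refl τ⟩
      simp [hg, hweldy, this]
    have hg0 : g 0 = (y 0 - c) ^ 2 := by simp [hg]
    have : g 0 = g τ := le_antisymm h2 h1
    rw [hg0, hgτ] at this
    rw [hc] at this
    nlinarith [this]
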